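/- Fix θ > 0, c̄ > 0. Let Σ : [c̄,∞) → (0,∞) be continuous and nondecreasing, Ψ : [c̄,∞) → ℝ continuous, and suppose A := (sup_{u≥c̄} (−Ψ(u))/Σ(u)) ∨ 0 < ∞. Let h ∈ C²([c̄,∞)) be nondecreasing and solve (Σh')' + Ψh' = θh on [c̄,∞). Then g := Σh' satisfies g' ≤ A·g + (θ/Σ(c̄)) ∫_{c̄}^{·} g + θ h(c̄), and consequently h'(x) ≤ Σ(c̄)^{−1} g̃(x) for all x ≥ c̄, where g̃ is the solution of g̃'' = A g̃' + (θ/Σ(c̄)) g̃ with g̃(c̄) = g(c̄)+1, g̃'(c̄) = A g̃(c̄) + θ h(c̄); in particular h' grows at most exponentially with rate A + √(θ/Σ(c̄)), so that ∫₀^∞ e^{−zv} h(v) dv < ∞ for every z > A + √(θ/Σ(c̄)). -/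

import Mathlib

open Set MeasureTheory Filter intervalIntegral


lemma exp_deriv_aux (l c x : ℝ) :
    HasDerivAt (fun y => Real.exp (l*(y-c))) (Real.exp (l*(x-c)) * l) x := by
  simpa using (((hasDerivAt_id x).sub_const c).const_mul l).exp

lemma ode_sol (A B cb s0 th : ℝ) (hA : 0 ≤ A) (hB : 0 < B) :
    ∃ gt gt' : ℝ → ℝ, gt cb = s0 ∧ gt' cb = A * s0 + th ∧
      (∀ x, HasDerivAt gt (gt' x) x) ∧
      (∀ x, HasDerivAt gt' (A * gt' x + B * gt x) x) ∧
      (∀ x, gt' x = A * gt x + B * (∫ u in cb..x, gt u) + th) ∧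
      (∃ M : ℝ, 0 ≤ M ∧ ∀ x ≥ cb, gt x ≤ M * Real.exp ((A + Real.sqrt B) * (x - cb))) := by
  obtain ⟨lp, lm, hsum, hprod, hlpp, hlmn, hlpr⟩ :
      ∃ lp lm : ℝ, lp + lm = A ∧ lp * lm = -B ∧ 0 < lp ∧ lm < 0 ∧ lp ≤ A + Real.sqrt B := by
    set D := Real.sqrt (A^2 + 4*B) with hDdef
    have hD2 : D^2 = A^2 + 4*B := Real.sq_sqrt (by positivity)
    have hDnn : 0 ≤ D := Real.sqrt_nonneg _
    have hDA : A < D := by nlinarith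
    have hsB : 0 < Real.sqrt B := Real.sqrt_pos.2 hB
    have hD' : D ≤ A + 2*Real.sqrt B := by
      have h2 : A^2 + 4*B ≤ (A + 2*Real.sqrt B)^2 := by
        nlinarith [Real.sq_sqrt hB.le, Real.sqrt_nonneg B]
      calc D ≤ Real.sqrt ((A + 2*Real.sqrt B)^2) := Real.sqrt_le_sqrt h2
        _ = A + 2*Real.sqrt B := Real.sqrt_sq (by positivity)
    exact ⟨(A+D)/2, (A-D)/2, by ring, by nlinarith, by linarith, by linarith, by linarith⟩
  have hlp2 : lp^2 = A*lp + B := by linear_combination lp*hsum - hprod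
  have hlm2 : lm^2 = A*lm + B := by linear_combination lm*hsum - hprod
  have hBne : B ≠ 0 := ne_of_gt hB
  obtain ⟨cp, cm, hcpcm, hcpl⟩ :
      ∃ cp cm : ℝ, cp + cm = s0 ∧ cp * lp + cm * lm = A * s0 + th := by
    have hd : lp - lm ≠ 0 := by intro hc; nlinarith
    exact ⟨(A*s0+th - lm*s0)/(lp-lm), (lp*s0 - (A*s0+th))/(lp-lm), by field_simp; ring,
      by field_simp; ring⟩
  refine ⟨fun x => cp * Real.exp (lp*(x-cb)) + cm * Real.exp (lm*(x-cb)),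
    fun x => cp * lp * Real.exp (lp*(x-cb)) + cm * lm * Real.exp (lm*(x-cb)), ?_, ?_, ?_, ?_, ?_, ?_⟩
  · simpa using hcpcm
  · simpa using hcpl
  · intro x
    have := ((exp_deriv_aux lp cb x).const_mul cp).add ((exp_deriv_aux lm cb x).const_mul cm)
    refine this.congr_deriv ?_; symm; ring
  · intro x
    have := ((exp_deriv_aux lp cb x).const_mul (cp*lp)).add ((exp_deriv_aux lm cb x).const_mul (cm*lm))
    refine this.congr_deriv ?_; symm
    linear_combination (-(cp * Real.exp (lp*(x-cb)))) * hlp2 + (-(cm * Real.exp (lm*(x-cb)))) * hlm2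
  · intro x
    have hint : (∫ u in cb..x, cp * Real.exp (lp*(u-cb)) + cm * Real.exp (lm*(u-cb)))
        = ((cp*lm*Real.exp (lp*(x-cb)) + cm*lp*Real.exp (lm*(x-cb))) - (cp*lm + cm*lp)) * (-B⁻¹) := by
      have hF : ∀ u ∈ uIcc cb x, HasDerivAt
          (fun u => (cp*lm*Real.exp (lp*(u-cb)) + cm*lp*Real.exp (lm*(u-cb))) * (-B⁻¹))
          (cp * Real.exp (lp*(u-cb)) + cm * Real.exp (lm*(u-cb))) u := by
        intro u _
        have := (((exp_deriv_aux lp cb u).const_mul (cp*lm)).add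
          ((exp_deriv_aux lm cb u).const_mul (cm*lp))).mul_const (-B⁻¹)
        refine this.congr_deriv ?_; symm
        field_simp
        simp only [mul_comm (u - cb)]
        linear_combination (Real.exp (lp*(u-cb)) * cp + Real.exp (lm*(u-cb)) * cm) * hprod
      have hci : IntervalIntegrable (fun u => cp * Real.exp (lp*(u-cb)) + cm * Real.exp (lm*(u-cb))) volume cb x := by
        apply Continuous.intervalIntegrable
        fun_prop
      have := intervalIntegral.integral_eq_sub_of_hasDerivAt hF hci
      rw [this]; simp; ring
    rw [hint]
    have hc : cp*lm + cm*lp = A*s0 - (A*s0+th) := by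
      have h1 : (cp + cm) * (lp + lm) = s0 * A := by rw [hcpcm, hsum]
      linear_combination h1 - hcpl
    field_simp
    simp only [mul_comm (x - cb)]
    linear_combination (Real.exp (lp*(x-cb)) * cp) * hlp2 - (Real.exp (lp*(x-cb)) * cp * lp) * hsum
      + (Real.exp (lm*(x-cb)) * cm) * hlm2 - (Real.exp (lm*(x-cb)) * cm * lm) * hsum
      - hc + (Real.exp (lp*(x-cb)) * cp + Real.exp (lm*(x-cb)) * cm) * hprod
      + (Real.exp (lp*(x-cb)) * cp + Real.exp (lm*(x-cb)) * cm) * hsum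
  · refine ⟨|cp| + |cm|, by positivity, ?_⟩
    intro x hx
    have hsB : 0 < Real.sqrt B := Real.sqrt_pos.2 hB
    have hr0 : 0 < A + Real.sqrt B := by linarith
    have hxcb : 0 ≤ x - cb := by linarith
    have h1 : Real.exp (lp*(x-cb)) ≤ Real.exp ((A + Real.sqrt B)*(x-cb)) :=
      Real.exp_le_exp.2 (mul_le_mul_of_nonneg_right hlpr hxcb)
    have h2 : Real.exp (lm*(x-cb)) ≤ Real.exp ((A + Real.sqrt B)*(x-cb)) := by
      apply Real.exp_le_exp.2
      have h3 : lm*(x-cb) ≤ 0 := mul_nonpos_of_nonpos_of_nonneg hlmn.le hxcb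
      nlinarith
    have hcpb : cp * Real.exp (lp*(x-cb)) ≤ |cp| * Real.exp ((A + Real.sqrt B)*(x-cb)) :=
      le_trans (mul_le_mul_of_nonneg_right (le_abs_self cp) (Real.exp_nonneg _))
        (mul_le_mul_of_nonneg_left h1 (abs_nonneg _))
    have hcmb : cm * Real.exp (lm*(x-cb)) ≤ |cm| * Real.exp ((A + Real.sqrt B)*(x-cb)) :=
      le_trans (mul_le_mul_of_nonneg_right (le_abs_self cm) (Real.exp_nonneg _))
        (mul_le_mul_of_nonneg_left h2 (abs_nonneg _))
    calc cp * Real.exp (lp*(x-cb)) + cm * Real.exp (lm*(x-cb))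
        ≤ |cp| * Real.exp ((A + Real.sqrt B)*(x-cb)) + |cm| * Real.exp ((A + Real.sqrt B)*(x-cb)) :=
          add_le_add hcpb hcmb
      _ = (|cp| + |cm|) * Real.exp ((A + Real.sqrt B)*(x-cb)) := by ring

/-- Comparison argument for `g = Σ h'`: `g' ≤ A g + (θ/Σ(c̄)) ∫ g + θ h(c̄)`, domination of
`h'` by the solution `g̃` of the associated constant-coefficient second order ODE, at most
exponential growth of `h'` with rate `A + √(θ/Σ(c̄))`, and hence finiteness of
`∫₀^∞ e^{−zv} h(v) dv` for every `z > A + √(θ/Σ(c̄))`. -/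
theorem stmt12 (Sig Psi : ℝ → ℝ) (θ cb : ℝ) (hθ : 0 < θ) (hcb : 0 < cb)
    (hScont : ContinuousOn Sig (Ici cb)) (hSmono : MonotoneOn Sig (Ici cb))
    (hSpos : ∀ x ≥ cb, 0 < Sig x)
    (hPcont : ContinuousOn Psi (Ici cb))
    (hbdd : BddAbove ((fun u => (-Psi u) / Sig u) '' Ici cb))
    (A : ℝ) (hA : A = max (sSup ((fun u => (-Psi u) / Sig u) '' Ici cb)) 0)
    (h h' h'' g' : ℝ → ℝ)
    (hh1 : ∀ x ∈ Ici cb, HasDerivAt h (h' x) x)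
    (hh2 : ∀ x ∈ Ici cb, HasDerivAt h' (h'' x) x)
    (hmono : MonotoneOn h (Ioi 0)) (hnn : ∀ v > (0:ℝ), 0 ≤ h v)
    (hg : ∀ x ∈ Ici cb, HasDerivAt (fun y => Sig y * h' y) (g' x) x)
    (hode : ∀ x ≥ cb, g' x + Psi x * h' x = θ * h x) :
    (∀ x ≥ cb, g' x ≤ A * (Sig x * h' x)
      + (θ / Sig cb) * (∫ u in cb..x, Sig u * h' u) + θ * h cb) ∧
    (∃ gt gt' : ℝ → ℝ,
      gt cb = Sig cb * h' cb + 1 ∧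
      gt' cb = A * gt cb + θ * h cb ∧
      (∀ x ∈ Ici cb, HasDerivAt gt (gt' x) x) ∧
      (∀ x ∈ Ici cb, HasDerivAt gt' (A * gt' x + (θ / Sig cb) * gt x) x) ∧
      (∀ x ≥ cb, h' x ≤ (Sig cb)⁻¹ * gt x)) ∧
    (∃ K : ℝ, ∀ x ≥ cb, h' x ≤ K * Real.exp ((A + Real.sqrt (θ / Sig cb)) * x)) ∧
    (∀ z : ℝ, A + Real.sqrt (θ / Sig cb) < z →
      IntegrableOn (fun v => Real.exp (-z*v) * h v) (Ioi 0)) := by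
  have hScb : 0 < Sig cb := hSpos cb le_rfl
  set B := θ / Sig cb with hBdef
  have hBpos : 0 < B := div_pos hθ hScb
  have hA0 : 0 ≤ A := by rw [hA]; exact le_max_right _ _
  -- h' is nonnegative on [cb, ∞)
  have hh'nn : ∀ x ≥ cb, 0 ≤ h' x := by
    intro x hx
    have hx0 : 0 < x := lt_of_lt_of_le hcb hx
    have ht : Tendsto (slope h x) (nhdsWithin x (Ioi x)) (nhds (h' x)) :=
      (hasDerivAt_iff_tendsto_slope.mp (hh1 x hx)).mono_left
        (nhdsWithin_mono x (fun y hy => mem_compl_singleton_iff.mpr (ne_of_gt hy)))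
    refine ge_of_tendsto ht ?_
    filter_upwards [self_mem_nhdsWithin] with y hy
    have hxy : x < y := hy
    have h1 : h x ≤ h y := hmono hx0 (lt_trans hx0 hxy) hxy.le
    have h2 : 0 ≤ (h y - h x)/(y - x) := div_nonneg (by linarith) (by linarith)
    rw [slope_def_field]
    exact h2
  -- continuity facts
  have hh'cont : ContinuousOn h' (Ici cb) := fun x hx => (hh2 x hx).continuousAt.continuousWithinAt
  have hgcont : ContinuousOn (fun y => Sig y * h' y) (Ici cb) :=
    fun x hx => (hg x hx).continuousAt.continuousWithinAt
  -- FTC for h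
  have hftc : ∀ x ≥ cb, ∫ u in cb..x, h' u = h x - h cb := by
    intro x hx
    apply intervalIntegral.integral_eq_sub_of_hasDerivAt
    · intro u hu
      rw [uIcc_of_le hx] at hu
      exact hh1 u hu.1
    · apply ContinuousOn.intervalIntegrable
      rw [uIcc_of_le hx]
      exact hh'cont.mono Icc_subset_Ici_self
  -- Part 1
  have key1 : ∀ x ≥ cb, g' x ≤ A * (Sig x * h' x)
      + B * (∫ u in cb..x, Sig u * h' u) + θ * h cb := by
    intro x hx
    have hgx : 0 ≤ Sig x * h' x := mul_nonneg (hSpos x hx).le (hh'nn x hx)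
    have h1 : -(Psi x * h' x) ≤ A * (Sig x * h' x) := by
      have hAx : (-Psi x)/Sig x ≤ A := by
        rw [hA]; exact le_max_of_le_left (le_csSup hbdd ⟨x, hx, rfl⟩)
      have h2 := mul_le_mul_of_nonneg_right hAx hgx
      have heq : (-Psi x)/Sig x * (Sig x * h' x) = -(Psi x * h' x) := by
        field_simp [ne_of_gt (hSpos x hx)]
      linarith [heq ▸ h2]
    have hmono_int : Sig cb * (∫ u in cb..x, h' u) ≤ ∫ u in cb..x, Sig u * h' u := by
      rw [← intervalIntegral.integral_const_mul]
      apply intervalIntegral.integral_mono_on hx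
      · apply ContinuousOn.intervalIntegrable
        rw [uIcc_of_le hx]
        exact ((hh'cont.mono Icc_subset_Ici_self).const_smul (Sig cb))
      · apply ContinuousOn.intervalIntegrable
        rw [uIcc_of_le hx]
        exact hgcont.mono Icc_subset_Ici_self
      · intro u hu
        exact mul_le_mul_of_nonneg_right (hSmono (mem_Ici.2 le_rfl) hu.1 hu.1) (hh'nn u hu.1)
    have h2 : θ * h x ≤ B * (∫ u in cb..x, Sig u * h' u) + θ * h cb := by
      have e1 : θ * h x = θ * (∫ u in cb..x, h' u) + θ * h cb := by rw [hftc x hx]; ring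
      have e2 : θ * (∫ u in cb..x, h' u) ≤ B * (∫ u in cb..x, Sig u * h' u) := by
        have e3 : θ * (∫ u in cb..x, h' u) = B * (Sig cb * ∫ u in cb..x, h' u) := by
          rw [hBdef]; field_simp
        rw [e3]
        exact mul_le_mul_of_nonneg_left hmono_int hBpos.le
      linarith
    have h3 := hode x hx
    linarith
  -- construct the comparison solution
  obtain ⟨gt, gt', hgtcb, hgt'cb, hgtd, hgtd', hkey2, M, hM0, hMb⟩ :=
    ode_sol A B cb (Sig cb * h' cb + 1) (θ * h cb) hA0 hBpos
  have hgtct : Continuous gt := by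
    rw [continuous_iff_continuousAt]; exact fun x => (hgtd x).continuousAt
  -- comparison: Sig x * h' x ≤ gt x on [cb, ∞)
  have hcomp : ∀ x ≥ cb, Sig x * h' x ≤ gt x := by
    intro x hx
    by_contra hcon
    push_neg at hcon
    set ζ : ℝ → ℝ := fun y => gt y - Sig y * h' y with hζdef
    have hζcont : ContinuousOn ζ (Ici cb) := (hgtct.continuousOn).sub hgcont
    have hζcb : ζ cb = 1 := by rw [hζdef]; simp [hgtcb]
    set S := {y | y ∈ Icc cb x ∧ ζ y ≤ 0} with hSdef
    have hSclosed : IsClosed S := by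
      have h0 : S = Icc cb x ∩ ζ ⁻¹' (Iic 0) := by
        ext y; simp [hSdef, mem_inter_iff]
      rw [h0]
      exact (hζcont.mono (Icc_subset_Ici_self : Icc cb x ⊆ Ici cb)).preimage_isClosed_of_isClosed
        isClosed_Icc isClosed_Iic
    have hScompact : IsCompact S :=
      IsCompact.of_isClosed_subset isCompact_Icc hSclosed (fun y hy => hy.1)
    have hSne : S.Nonempty := ⟨x, ⟨hx, le_rfl⟩, by simp only [hζdef]; linarith⟩
    set t := sInf S with htdef
    have htS : t ∈ S := hScompact.sInf_mem hSne
    obtain ⟨htIcc, htζ⟩ := htS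
    have htcb : cb < t := by
      rcases lt_or_eq_of_le htIcc.1 with hlt | heq
      · exact hlt
      · exfalso; rw [← heq, hζcb] at htζ; linarith
    have hpos : ∀ y ∈ Ico cb t, 0 < ζ y := by
      intro y hy
      by_contra hc
      push_neg at hc
      have hyS : y ∈ S := ⟨⟨hy.1, le_trans hy.2.le htIcc.2⟩, hc⟩
      have := csInf_le hScompact.bddBelow hyS
      rw [← htdef] at this
      linarith [hy.2]
    have hζt : ζ t = 0 := by
      refine le_antisymm htζ ?_
      have hcw : Tendsto ζ (nhdsWithin t (Ico cb t)) (nhds (ζ t)) :=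
        (((hgtd t).continuousAt).sub ((hg t htIcc.1).continuousAt)).continuousWithinAt.tendsto
      have hmem : t ∈ closure (Ico cb t) := by
        rw [closure_Ico htcb.ne]
        exact ⟨htcb.le, le_rfl⟩
      have : (nhdsWithin t (Ico cb t)).NeBot := mem_closure_iff_nhdsWithin_neBot.mp hmem
      refine ge_of_tendsto hcw ?_
      filter_upwards [self_mem_nhdsWithin] with y hy
      exact (hpos y hy).le
    have hζnn : ∀ y ∈ Icc cb t, 0 ≤ ζ y := by
      intro y hy
      rcases lt_or_eq_of_le hy.2 with hlt | heq
      · exact (hpos y ⟨hy.1, hlt⟩).le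
      · rw [heq, hζt]
    have hZ : ∀ y ∈ Icc cb t, 0 ≤ ∫ u in cb..y, ζ u := by
      intro y hy
      exact intervalIntegral.integral_nonneg hy.1 (fun u hu => hζnn u ⟨hu.1, le_trans hu.2 hy.2⟩)
    have hζd : ∀ y ∈ Ici cb, HasDerivAt ζ (gt' y - g' y) y :=
      fun y hy => (hgtd y).sub (hg y hy)
    have hζ'ge : ∀ y ∈ Icc cb t, A * ζ y ≤ gt' y - g' y := by
      intro y hy
      have hy' : cb ≤ y := hy.1
      have h1 := key1 y hy'
      have h2 := hkey2 y
      have hsub : ∫ u in cb..y, ζ u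
          = (∫ u in cb..y, gt u) - ∫ u in cb..y, Sig u * h' u := by
        rw [hζdef, ← intervalIntegral.integral_sub]
        · exact (hgtct.intervalIntegrable cb y)
        · apply ContinuousOn.intervalIntegrable
          rw [uIcc_of_le hy']
          exact hgcont.mono Icc_subset_Ici_self
      have hZy := hZ y hy
      rw [hsub] at hZy
      have h4 : 0 ≤ B * ((∫ u in cb..y, gt u) - ∫ u in cb..y, Sig u * h' u) :=
        mul_nonneg hBpos.le hZy
      have hζy : ζ y = gt y - Sig y * h' y := rfl
      rw [hζy]
      nlinarith [h4]
    set w : ℝ → ℝ := fun y => Real.exp (-A*y) * ζ y with hwdef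
    have hwd : ∀ y ∈ Ici cb, HasDerivAt w
        (Real.exp (-A*y) * (-A) * ζ y + Real.exp (-A*y) * (gt' y - g' y)) y := by
      intro y hy
      have he : HasDerivAt (fun y => Real.exp (-A*y)) (Real.exp (-A*y) * (-A)) y := by
        simpa using ((hasDerivAt_id y).const_mul (-A)).exp
      exact he.mul (hζd y hy)
    have hw_mono : MonotoneOn w (Icc cb t) := by
      apply monotoneOn_of_deriv_nonneg (convex_Icc cb t)
      · exact ((Real.continuous_exp.comp (continuous_const.mul continuous_id)).continuousOn).mul
          (hζcont.mono (Icc_subset_Ici_self))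
      · intro y hy
        rw [interior_Icc] at hy
        exact ((hwd y (le_of_lt hy.1)).differentiableAt).differentiableWithinAt
      · intro y hy
        rw [interior_Icc] at hy
        have hyI : y ∈ Icc cb t := ⟨hy.1.le, hy.2.le⟩
        rw [(hwd y hy.1.le).deriv]
        have := hζ'ge y hyI
        nlinarith [Real.exp_pos (-A*y)]
    have hfin : w cb ≤ w t := hw_mono ⟨le_rfl, htcb.le⟩ ⟨htcb.le, le_rfl⟩ htcb.le
    rw [hwdef] at hfin
    simp only [hζcb, hζt, mul_one, mul_zero] at hfin
    exact absurd hfin (not_le.2 (Real.exp_pos _))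
  -- h' x ≤ (Sig cb)⁻¹ * gt x
  have h'le : ∀ x ≥ cb, h' x ≤ (Sig cb)⁻¹ * gt x := by
    intro x hx
    have h1 : Sig cb * h' x ≤ Sig x * h' x :=
      mul_le_mul_of_nonneg_right (hSmono (mem_Ici.2 le_rfl) hx hx) (hh'nn x hx)
    have h2 := hcomp x hx
    calc h' x = (Sig cb)⁻¹ * (Sig cb * h' x) := by field_simp
      _ ≤ (Sig cb)⁻¹ * gt x :=
          mul_le_mul_of_nonneg_left (le_trans h1 h2) (inv_nonneg.2 hScb.le)
  -- exponential bound on h'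
  set r := A + Real.sqrt B with hrdef
  have hr0 : 0 < r := add_pos_of_nonneg_of_pos hA0 (Real.sqrt_pos.2 hBpos)
  set K := (Sig cb)⁻¹ * M * Real.exp (-(r * cb)) with hKdef
  have hK0 : 0 ≤ K := by positivity
  have hKb : ∀ x ≥ cb, h' x ≤ K * Real.exp (r * x) := by
    intro x hx
    calc h' x ≤ (Sig cb)⁻¹ * gt x := h'le x hx
      _ ≤ (Sig cb)⁻¹ * (M * Real.exp (r*(x-cb))) :=
          mul_le_mul_of_nonneg_left (hMb x hx) (inv_nonneg.2 hScb.le)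
      _ = K * Real.exp (r * x) := by
          rw [hKdef, show r*(x-cb) = -(r*cb) + r*x by ring, Real.exp_add]; ring
  refine ⟨key1, ⟨gt, gt', hgtcb, by rw [hgtcb]; exact hgt'cb, fun x _ => hgtd x,
    fun x _ => hgtd' x, h'le⟩, ⟨K, hKb⟩, ?_⟩
  -- Part 4: integrability
  intro z hz
  set C := h cb + K / r with hCdef
  have hhcb : 0 ≤ h cb := hnn cb hcb
  have hC0 : 0 ≤ C := by positivity
  have hhb : ∀ v > (0:ℝ), h v ≤ C * Real.exp (r*v) := by
    intro v hv
    show h v ≤ (h cb + K / r) * Real.exp (r*v)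
    have hexp1 : 1 ≤ Real.exp (r*v) := Real.one_le_exp (by positivity)
    have e0 : h cb ≤ h cb * Real.exp (r*v) := le_mul_of_one_le_right hhcb hexp1
    rcases le_total v cb with hvc | hvc
    · have h1 : h v ≤ h cb := hmono hv hcb hvc
      have hKr0 : 0 ≤ K/r * Real.exp (r*v) := by positivity
      nlinarith
    · have hf := hftc v hvc
      have hint_le : (∫ u in cb..v, h' u) ≤ ∫ u in cb..v, K * Real.exp (r*u) := by
        apply intervalIntegral.integral_mono_on hvc
        · apply ContinuousOn.intervalIntegrable
          rw [uIcc_of_le hvc]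
          exact hh'cont.mono Icc_subset_Ici_self
        · apply Continuous.intervalIntegrable; fun_prop
        · intro u hu; exact hKb u hu.1
      have hexp : (∫ u in cb..v, K * Real.exp (r*u))
          = K/r * Real.exp (r*v) - K/r * Real.exp (r*cb) := by
        have hF : ∀ u ∈ uIcc cb v, HasDerivAt (fun u => K/r * Real.exp (r*u))
            (K * Real.exp (r*u)) u := by
          intro u _
          have := (((hasDerivAt_id u).const_mul r).exp).const_mul (K/r)
          refine this.congr_deriv ?_; symm
          simp only [id]
          field_simp
        rw [intervalIntegral.integral_eq_sub_of_hasDerivAt hF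
          (by apply Continuous.intervalIntegrable; fun_prop)]
      have hKr : 0 ≤ K/r * Real.exp (r*cb) := by positivity
      linarith [hf, hint_le, hexp, hKr, e0]
  have hmeas : AEStronglyMeasurable (fun v => Real.exp (-z*v) * h v)
      (volume.restrict (Ioi 0)) := by
    apply AEStronglyMeasurable.mul
    · exact ((Real.continuous_exp.comp (continuous_const.mul continuous_id)).aestronglyMeasurable)
    · exact (aemeasurable_restrict_of_monotoneOn measurableSet_Ioi hmono).aestronglyMeasurable
  have hdom : IntegrableOn (fun v => C * Real.exp ((r - z)*v)) (Ioi 0) := by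
    have h1 := (exp_neg_integrableOn_Ioi 0 (show 0 < z - r by linarith)).const_mul C
    have h2 : (fun v => C * Real.exp ((r - z)*v)) = (fun v => C * Real.exp (-(z-r)*v)) := by
      funext v; rw [show (r - z)*v = -(z-r)*v by ring]
    rw [h2]
    exact h1
  apply Integrable.mono' hdom hmeas
  filter_upwards [ae_restrict_mem measurableSet_Ioi] with v hv
  have hv0 : (0:ℝ) < v := hv
  rw [Real.norm_eq_abs, abs_of_nonneg (mul_nonneg (Real.exp_nonneg _) (hnn v hv0))]
  calc Real.exp (-z*v) * h v ≤ Real.exp (-z*v) * (C * Real.exp (r*v)) :=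
        mul_le_mul_of_nonneg_left (hhb v hv0) (Real.exp_nonneg _)
    _ = C * Real.exp ((r - z)*v) := by
        rw [show (r - z)*v = -z*v + r*v by ring, Real.exp_add]; ring
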